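/- Under the iteration θ⁽ᵐ⁺¹⁾ = Xθ⁽ᵐ⁾ + Yf + W⁽ᵐ⁾ with the assumptions that A⁻¹ - Cov(W) = XA⁻¹Xᵀ, Yf = (I - X)A⁻¹f, and that X is a contraction with respect to some matrix norm (‖X‖ < 1), the mean E[θ⁽ᵐ⁾] converges to A⁻¹f and the covariance Cov(θ⁽ᵐ⁾) converges to A⁻¹ as m → ∞, for any square-integrable initial condition θ⁽⁰⁾. -/

import Mathlib

open Matrix MeasureTheory ProbabilityTheory Filter

section AuxNorm

attribute [local instance] Matrix.normedAddCommGroup Matrix.normedSpace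

variable {n : ℕ}

lemma aux_nn_zero (nn : Matrix (Fin n) (Fin n) ℝ → ℝ)
    (hsmul : ∀ (a : ℝ) M, nn (a • M) = |a| * nn M) : nn 0 = 0 := by
  have := hsmul 0 0
  simpa using this

lemma aux_nn_sum (nn : Matrix (Fin n) (Fin n) ℝ → ℝ)
    (hsmul : ∀ (a : ℝ) M, nn (a • M) = |a| * nn M)
    (hadd : ∀ M N, nn (M + N) ≤ nn M + nn N)
    {ι : Type*} (s : Finset ι) (g : ι → Matrix (Fin n) (Fin n) ℝ) :
    nn (∑ i ∈ s, g i) ≤ ∑ i ∈ s, nn (g i) := by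
  classical
  induction s using Finset.induction with
  | empty => simp [aux_nn_zero nn hsmul]
  | @insert a s ha ih =>
    rw [Finset.sum_insert ha, Finset.sum_insert ha]
    exact (hadd _ _).trans (by linarith)

lemma aux_nn_lower (nn : Matrix (Fin n) (Fin n) ℝ → ℝ)
    (h0 : ∀ M, 0 ≤ nn M) (hdef : ∀ M, nn M = 0 → M = 0)
    (hsmul : ∀ (a : ℝ) M, nn (a • M) = |a| * nn M)
    (hadd : ∀ M N, nn (M + N) ≤ nn M + nn N) :
    ∃ c > 0, ∀ M, c * ‖M‖ ≤ nn M := by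
  classical
  have nn_zero : nn 0 = 0 := aux_nn_zero nn hsmul
  -- upper bound
  set K : ℝ := ∑ i : Fin n, ∑ j : Fin n, nn (Matrix.single i j (1 : ℝ)) with hKdef
  have hupper : ∀ M : Matrix (Fin n) (Fin n) ℝ, nn M ≤ K * ‖M‖ := by
    intro M
    have h1 : nn M ≤ ∑ i : Fin n, nn (∑ j : Fin n, Matrix.single i j (M i j)) := by
      calc nn M = nn (∑ i : Fin n, ∑ j : Fin n, Matrix.single i j (M i j)) := by
            rw [← Matrix.matrix_eq_sum_single M]
        _ ≤ _ := aux_nn_sum nn hsmul hadd _ _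
    have h2 : ∀ i j, nn (Matrix.single i j (M i j)) ≤ nn (Matrix.single i j (1:ℝ)) * ‖M‖ := by
      intro i j
      have : Matrix.single i j (M i j) = (M i j) • Matrix.single i j (1:ℝ) := by
        rw [Matrix.smul_single, smul_eq_mul, mul_one]
      rw [this, hsmul]
      have h3 : |M i j| ≤ ‖M‖ := Matrix.norm_entry_le_entrywise_sup_norm M
      have h4 : 0 ≤ nn (Matrix.single i j (1:ℝ)) := h0 _
      calc |M i j| * nn (Matrix.single i j (1:ℝ))
          ≤ ‖M‖ * nn (Matrix.single i j (1:ℝ)) :=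
            mul_le_mul_of_nonneg_right h3 h4
        _ = nn (Matrix.single i j (1:ℝ)) * ‖M‖ := by ring
    calc nn M ≤ ∑ i : Fin n, nn (∑ j : Fin n, Matrix.single i j (M i j)) := h1
      _ ≤ ∑ i : Fin n, ∑ j : Fin n, nn (Matrix.single i j (M i j)) :=
          Finset.sum_le_sum fun i _ => aux_nn_sum nn hsmul hadd _ _
      _ ≤ ∑ i : Fin n, ∑ j : Fin n, nn (Matrix.single i j (1:ℝ)) * ‖M‖ :=
          Finset.sum_le_sum fun i _ => Finset.sum_le_sum fun j _ => h2 i j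
      _ = K * ‖M‖ := by rw [hKdef, Finset.sum_mul]; congr 1; ext i; rw [Finset.sum_mul]
  have hK0 : 0 ≤ K := Finset.sum_nonneg fun i _ => Finset.sum_nonneg fun j _ => h0 _
  -- continuity of nn
  have hlip : ∀ M N : Matrix (Fin n) (Fin n) ℝ, |nn M - nn N| ≤ K * ‖M - N‖ := by
    intro M N
    have hMN : nn M - nn N ≤ nn (M - N) := by
      have := hadd (M - N) N
      simp only [sub_add_cancel] at this
      linarith
    have hNM : nn N - nn M ≤ nn (M - N) := by
      have := hadd (N - M) M
      simp only [sub_add_cancel] at this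
      have heq : nn (N - M) = nn (M - N) := by
        have : N - M = (-1 : ℝ) • (M - N) := by simp
        rw [this, hsmul]; simp
      linarith
    rw [abs_sub_le_iff]
    exact ⟨hMN.trans (hupper _), hNM.trans (hupper _)⟩
  have hcont : Continuous nn := by
    refine (LipschitzWith.of_dist_le_mul (K := Real.toNNReal K) fun M N => ?_).continuous
    rw [Real.dist_eq, dist_eq_norm, Real.coe_toNNReal K hK0]
    exact hlip M N
  by_cases hS : (Metric.sphere (0 : Matrix (Fin n) (Fin n) ℝ) 1).Nonempty
  · obtain ⟨u, hu, hmin⟩ := (isCompact_sphere (0 : Matrix (Fin n) (Fin n) ℝ) 1).exists_isMinOn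
      hS hcont.continuousOn
    have hunorm : ‖u‖ = 1 := by simpa using mem_sphere_zero_iff_norm.mp hu
    have hc0 : 0 < nn u := by
      rcases lt_or_eq_of_le (h0 u) with h | h
      · exact h
      · exfalso
        have : u = 0 := hdef u h.symm
        rw [this, norm_zero] at hunorm; norm_num at hunorm
    refine ⟨nn u, hc0, fun M => ?_⟩
    by_cases hM : M = 0
    · simp [hM, nn_zero]
    · have hMn : 0 < ‖M‖ := norm_pos_iff.mpr hM
      have hmem : ‖M‖⁻¹ • M ∈ Metric.sphere (0 : Matrix (Fin n) (Fin n) ℝ) 1 := by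
        rw [mem_sphere_zero_iff_norm, norm_smul, norm_inv, norm_norm,
          inv_mul_cancel₀ hMn.ne']
      have := hmin hmem
      rw [isMinOn_iff] at hmin
      have h5 : nn u ≤ nn (‖M‖⁻¹ • M) := hmin _ hmem
      rw [hsmul, abs_inv, abs_norm] at h5
      calc nn u * ‖M‖ ≤ (‖M‖⁻¹ * nn M) * ‖M‖ := mul_le_mul_of_nonneg_right h5 hMn.le
        _ = nn M := by field_simp
  · refine ⟨1, one_pos, fun M => ?_⟩
    have hM : M = 0 := by
      by_contra hM
      exact hS ⟨‖M‖⁻¹ • M, by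
        rw [mem_sphere_zero_iff_norm, norm_smul, norm_inv, norm_norm,
          inv_mul_cancel₀ (norm_pos_iff.mpr hM).ne']⟩
    simp [hM, nn_zero]

lemma aux_pow_entry_tendsto (X : Matrix (Fin n) (Fin n) ℝ)
    (nn : Matrix (Fin n) (Fin n) ℝ → ℝ)
    (h0 : ∀ M, 0 ≤ nn M) (hdef : ∀ M, nn M = 0 → M = 0)
    (hsmul : ∀ (a : ℝ) M, nn (a • M) = |a| * nn M)
    (hadd : ∀ M N, nn (M + N) ≤ nn M + nn N)
    (hmul : ∀ M N, nn (M * N) ≤ nn M * nn N)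
    (hX : nn X < 1) :
    ∀ i j, Tendsto (fun m : ℕ => (X ^ m) i j) atTop (nhds 0) := by
  obtain ⟨c, hc, hlow⟩ := aux_nn_lower nn h0 hdef hsmul hadd
  have hpow : ∀ m : ℕ, nn (X ^ m) ≤ nn 1 * nn X ^ m := by
    intro m
    induction m with
    | zero => simp
    | succ m ih =>
      calc nn (X ^ (m+1)) = nn (X ^ m * X) := by rw [pow_succ]
        _ ≤ nn (X ^ m) * nn X := hmul _ _
        _ ≤ (nn 1 * nn X ^ m) * nn X := mul_le_mul_of_nonneg_right ih (h0 _)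
        _ = nn 1 * nn X ^ (m+1) := by ring
  intro i j
  have hbound : ∀ m : ℕ, |(X ^ m) i j| ≤ c⁻¹ * nn 1 * nn X ^ m := by
    intro m
    have h1 : |(X ^ m) i j| ≤ ‖X ^ m‖ := by
      simpa [Real.norm_eq_abs] using Matrix.norm_entry_le_entrywise_sup_norm (X ^ m) (i := i) (j := j)
    have h2 : c * ‖X ^ m‖ ≤ nn (X ^ m) := hlow _
    have h3 : ‖X ^ m‖ ≤ c⁻¹ * nn (X ^ m) := by
      rw [le_inv_mul_iff₀ hc]; linarith
    calc |(X ^ m) i j| ≤ c⁻¹ * nn (X ^ m) := h1.trans h3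
      _ ≤ c⁻¹ * (nn 1 * nn X ^ m) :=
          mul_le_mul_of_nonneg_left (hpow m) (inv_nonneg.mpr hc.le)
      _ = c⁻¹ * nn 1 * nn X ^ m := by ring
  have hgeo : Tendsto (fun m : ℕ => c⁻¹ * nn 1 * nn X ^ m) atTop (nhds 0) := by
    have := tendsto_pow_atTop_nhds_zero_of_lt_one (h0 X) hX
    simpa using this.const_mul (c⁻¹ * nn 1)
  exact squeeze_zero_norm hbound hgeo

end AuxNorm

lemma aux_integrable_mul {Ω : Type*} [MeasurableSpace Ω] {P : Measure Ω}
    {f g : Ω → ℝ} (hf : MemLp f 2 P) (hg : MemLp g 2 P) :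
    Integrable (fun ω => f ω * g ω) P := by
  have h : MemLp (f • g) 1 P := hg.smul hf
  exact memLp_one_iff_integrable.mp h

/-- The (componentwise) mean of a random vector. -/
noncomputable def meanVec {Ω : Type*} [MeasurableSpace Ω] (P : Measure Ω) {n : ℕ}
    (X : Ω → Fin n → ℝ) : Fin n → ℝ :=
  fun i => ∫ ω, X ω i ∂P

/-- The (cross-)covariance matrix `Cov(X, Y) = E[(X - E X)(Y - E Y)ᵀ]` of two random
vectors. -/
noncomputable def covMat {Ω : Type*} [MeasurableSpace Ω] (P : Measure Ω) {n : ℕ}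
    (X Y : Ω → Fin n → ℝ) : Matrix (Fin n) (Fin n) ℝ :=
  Matrix.of fun i j =>
    ∫ ω, (X ω i - meanVec P X i) * (Y ω j - meanVec P Y j) ∂P

/-- For the iteration `θ⁽ᵐ⁺¹⁾ = X θ⁽ᵐ⁾ + Y f + W⁽ᵐ⁾` with i.i.d. mean-zero
noise of covariance `A⁻¹ - X A⁻¹ Xᵀ` independent of the current (and earlier) states,
`Y f = (I - X) A⁻¹ f`, and `X` a contraction with respect to some consistent
(submultiplicative) matrix norm, the means `E[θ⁽ᵐ⁾]` converge to `A⁻¹ f` and the covariances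
`Cov(θ⁽ᵐ⁾)` converge to `A⁻¹`, for any square-integrable initial condition. -/
theorem mgmc_moment_convergence {n : ℕ} {Ω : Type*} [MeasurableSpace Ω]
    (P : Measure Ω) [IsProbabilityMeasure P]
    (A X Y : Matrix (Fin n) (Fin n) ℝ) (hA : A.PosDef) (hAs : A.IsSymm)
    (f : Fin n → ℝ) (hYf : Y.mulVec f = (1 - X).mulVec (A⁻¹.mulVec f))
    (θ W : ℕ → Ω → Fin n → ℝ)
    (hθm : ∀ m, Measurable (θ m)) (hWm : ∀ m, Measurable (W m))
    (hθL2 : ∀ m, MemLp (θ m) 2 P) (hWL2 : ∀ m, MemLp (W m) 2 P)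
    (hrec : ∀ m ω, θ (m + 1) ω = X.mulVec (θ m ω) + Y.mulVec f + W m ω)
    (hW0 : ∀ m, meanVec P (W m) = 0)
    (hWK : ∀ m, covMat P (W m) (W m) = A⁻¹ - X * A⁻¹ * Xᵀ)
    (hind : ∀ m k, IndepFun (θ m) (W (m + k)) P)
    (hnorm : ∃ nn : Matrix (Fin n) (Fin n) ℝ → ℝ,
        (∀ M, 0 ≤ nn M) ∧ (∀ M, nn M = 0 → M = 0) ∧
        (∀ (a : ℝ) M, nn (a • M) = |a| * nn M) ∧
        (∀ M N, nn (M + N) ≤ nn M + nn N) ∧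
        (∀ M N, nn (M * N) ≤ nn M * nn N) ∧ nn X < 1) :
    Tendsto (fun m => meanVec P (θ m)) atTop (nhds (A⁻¹.mulVec f)) ∧
      Tendsto (fun m => covMat P (θ m) (θ m)) atTop (nhds A⁻¹) := by
  classical
  obtain ⟨nn, nn0, nndef, nnsmul, nnadd, nnmul, nnX⟩ := hnorm
  have hXpow : ∀ i j, Tendsto (fun m : ℕ => (X ^ m) i j) atTop (nhds 0) :=
    aux_pow_entry_tendsto X nn nn0 nndef nnsmul nnadd nnmul nnX
  -- componentwise L² and integrability
  have hθc : ∀ m i, MemLp (fun ω => θ m ω i) 2 P := fun m i =>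
    (ContinuousLinearMap.proj (R := ℝ) (φ := fun _ : Fin n => ℝ) i).comp_memLp' (hθL2 m)
  have hWc : ∀ m i, MemLp (fun ω => W m ω i) 2 P := fun m i =>
    (ContinuousLinearMap.proj (R := ℝ) (φ := fun _ : Fin n => ℝ) i).comp_memLp' (hWL2 m)
  have hθi : ∀ m i, Integrable (fun ω => θ m ω i) P := fun m i =>
    (hθc m i).integrable one_le_two
  have hWi : ∀ m i, Integrable (fun ω => W m ω i) P := fun m i =>
    (hWc m i).integrable one_le_two
  have hEW : ∀ m j, ∫ ω, W m ω j ∂P = 0 := by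
    intro m j
    have := congrFun (hW0 m) j
    simpa [meanVec] using this
  have hindc : ∀ m i j, IndepFun (fun ω => θ m ω i) (fun ω => W m ω j) P := by
    intro m i j
    have h := hind m 0
    rw [Nat.add_zero] at h
    exact h.comp (measurable_pi_apply i) (measurable_pi_apply j)
  have hEθW : ∀ m i j, ∫ ω, θ m ω i * W m ω j ∂P = 0 := by
    intro m i j
    have := (hindc m i j).integral_mul_eq_mul_integral (hθi m i).aestronglyMeasurable (hWi m j).aestronglyMeasurable
    calc ∫ ω, θ m ω i * W m ω j ∂P
        = (∫ ω, θ m ω i ∂P) * ∫ ω, W m ω j ∂P := this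
      _ = 0 := by rw [hEW]; ring
  -- the mean recurrence
  have hmean : ∀ m, meanVec P (θ (m + 1)) = X.mulVec (meanVec P (θ m)) + Y.mulVec f := by
    intro m
    funext i
    have hsplit : ∀ ω, θ (m + 1) ω i
        = (∑ k, X i k * θ m ω k) + ((Y.mulVec f) i + W m ω i) := by
      intro ω
      rw [hrec]
      simp [Matrix.mulVec, dotProduct]
      ring
    have hint1 : Integrable (fun ω => ∑ k, X i k * θ m ω k) P :=
      integrable_finset_sum _ fun k _ => (hθi m k).const_mul _
    have hint2 : Integrable (fun ω => (Y.mulVec f) i + W m ω i) P :=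
      (integrable_const _).add (hWi m i)
    calc meanVec P (θ (m + 1)) i = ∫ ω, ((∑ k, X i k * θ m ω k)
          + ((Y.mulVec f) i + W m ω i)) ∂P := by
            simp only [meanVec]
            exact integral_congr_ae (Filter.Eventually.of_forall hsplit)
      _ = (∫ ω, ∑ k, X i k * θ m ω k ∂P) + ∫ ω, ((Y.mulVec f) i + W m ω i) ∂P :=
            integral_add hint1 hint2
      _ = (∑ k, X i k * meanVec P (θ m) k) + ((Y.mulVec f) i + 0) := by
            rw [integral_finset_sum _ fun k _ => (hθi m k).const_mul _,
              integral_add (integrable_const _) (hWi m i), integral_const, hEW]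
            simp [meanVec, integral_const_mul]
      _ = (X.mulVec (meanVec P (θ m)) + Y.mulVec f) i := by
            simp [Matrix.mulVec, dotProduct]
  -- error recursion for the mean
  set b : Fin n → ℝ := A⁻¹.mulVec f with hb
  have hYf' : Y.mulVec f = b - X.mulVec b := by
    rw [hYf, Matrix.sub_mulVec, Matrix.one_mulVec]
  have herr : ∀ m, meanVec P (θ m) - b = (X ^ m).mulVec (meanVec P (θ 0) - b) := by
    intro m
    induction m with
    | zero => rw [pow_zero, Matrix.one_mulVec]
    | succ m ih =>
      rw [hmean m, hYf']
      have : X.mulVec (meanVec P (θ m)) + (b - X.mulVec b) - b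
          = X.mulVec (meanVec P (θ m) - b) := by
        rw [Matrix.mulVec_sub]
        abel
      rw [this, ih, Matrix.mulVec_mulVec, ← pow_succ']
  have hmean_tendsto : Tendsto (fun m => meanVec P (θ m)) atTop (nhds b) := by
    rw [tendsto_pi_nhds]
    intro i
    have hrepr : ∀ m, meanVec P (θ m) i
        = b i + ∑ k, (X ^ m) i k * (meanVec P (θ 0) - b) k := by
      intro m
      have := congrFun (herr m) i
      simp only [Pi.sub_apply] at this
      have h2 : ((X ^ m).mulVec (meanVec P (θ 0) - b)) i
          = ∑ k, (X ^ m) i k * (meanVec P (θ 0) - b) k := by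
        simp [Matrix.mulVec, dotProduct]
      linarith [this, h2.symm.le]
    simp only [hrepr]
    have hsum : Tendsto (fun m => ∑ k, (X ^ m) i k * (meanVec P (θ 0) - b) k)
        atTop (nhds 0) := by
      have : Tendsto (fun m => ∑ k, (X ^ m) i k * (meanVec P (θ 0) - b) k)
          atTop (nhds (∑ k : Fin n, 0)) :=
        tendsto_finset_sum _ fun k _ => by
          simpa using (hXpow i k).mul_const ((meanVec P (θ 0) - b) k)
      simpa using this
    simpa using (tendsto_const_nhds (x := b i)).add hsum
  -- centered variables
  set c : ℕ → Fin n → Ω → ℝ := fun m k ω => θ m ω k - meanVec P (θ m) k with hcdef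
  have hcL2 : ∀ m k, MemLp (c m k) 2 P := fun m k => (hθc m k).sub (memLp_const _)
  have hEcW : ∀ m k j, ∫ ω, c m k ω * W m ω j ∂P = 0 := by
    intro m k j
    have hpt : ∀ ω, c m k ω * W m ω j
        = θ m ω k * W m ω j - meanVec P (θ m) k * W m ω j := by
      intro ω; simp only [hcdef]; ring
    rw [integral_congr_ae (Filter.Eventually.of_forall hpt),
      integral_sub (aux_integrable_mul (hθc m k) (hWc m j)) ((hWi m j).const_mul _),
      hEθW, integral_const_mul, hEW]
    ring
  have hWWint : ∀ m i j, ∫ ω, W m ω i * W m ω j ∂P = (A⁻¹ - X * A⁻¹ * Xᵀ) i j := by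
    intro m i j
    have h1 := congrFun (congrFun (hWK m) i) j
    rw [← h1]
    show _ = ∫ ω, (W m ω i - meanVec P (W m) i) * (W m ω j - meanVec P (W m) j) ∂P
    rw [hW0]
    simp
  -- covariance recurrence
  have hkey : ∀ m, covMat P (θ (m + 1)) (θ (m + 1))
      = X * covMat P (θ m) (θ m) * Xᵀ + (A⁻¹ - X * A⁻¹ * Xᵀ) := by
    intro m
    ext i j
    have hdiff : ∀ (i : Fin n) ω, θ (m + 1) ω i - meanVec P (θ (m + 1)) i
        = (∑ k, X i k * c m k ω) + W m ω i := by
      intro i ω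
      rw [hrec m ω, hmean m]
      simp only [hcdef, Pi.add_apply, Matrix.mulVec, dotProduct]
      have e : ∑ k, X i k * (θ m ω k - meanVec P (θ m) k)
          = (∑ k, X i k * θ m ω k) - ∑ k, X i k * meanVec P (θ m) k := by
        rw [← Finset.sum_sub_distrib]
        exact Finset.sum_congr rfl fun k _ => by ring
      rw [e]; ring
    have hpt : ∀ ω, (θ (m + 1) ω i - meanVec P (θ (m + 1)) i)
          * (θ (m + 1) ω j - meanVec P (θ (m + 1)) j)
        = (∑ k, ∑ l, (X i k * X j l) * (c m k ω * c m l ω))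
          + ((∑ k, X i k * (c m k ω * W m ω j))
          + ((∑ l, X j l * (c m l ω * W m ω i))
          + W m ω i * W m ω j)) := by
      intro ω
      rw [hdiff i ω, hdiff j ω]
      have e1 : (∑ k, X i k * c m k ω) * (∑ l, X j l * c m l ω)
          = ∑ k, ∑ l, (X i k * X j l) * (c m k ω * c m l ω) := by
        rw [Finset.sum_mul_sum]
        exact Finset.sum_congr rfl fun k _ => Finset.sum_congr rfl fun l _ => by ring
      have e2 : (∑ k, X i k * c m k ω) * W m ω j
          = ∑ k, X i k * (c m k ω * W m ω j) := by
        rw [Finset.sum_mul]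
        exact Finset.sum_congr rfl fun k _ => by ring
      have e3 : W m ω i * (∑ l, X j l * c m l ω)
          = ∑ l, X j l * (c m l ω * W m ω i) := by
        rw [Finset.mul_sum]
        exact Finset.sum_congr rfl fun l _ => by ring
      calc ((∑ k, X i k * c m k ω) + W m ω i) * ((∑ l, X j l * c m l ω) + W m ω j)
          = (∑ k, X i k * c m k ω) * (∑ l, X j l * c m l ω)
            + ((∑ k, X i k * c m k ω) * W m ω j
            + (W m ω i * (∑ l, X j l * c m l ω)
            + W m ω i * W m ω j)) := by ring
        _ = _ := by rw [e1, e2, e3]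
    have hccI : ∀ k l, Integrable (fun ω => c m k ω * c m l ω) P := fun k l =>
      aux_integrable_mul (hcL2 m k) (hcL2 m l)
    have hcWI : ∀ k j', Integrable (fun ω => c m k ω * W m ω j') P := fun k j' =>
      aux_integrable_mul (hcL2 m k) (hWc m j')
    have hI1 : Integrable (fun ω => ∑ k, ∑ l, (X i k * X j l) * (c m k ω * c m l ω)) P :=
      integrable_finset_sum _ fun k _ => integrable_finset_sum _ fun l _ =>
        (hccI k l).const_mul _
    have hI2 : Integrable (fun ω => ∑ k, X i k * (c m k ω * W m ω j)) P :=
      integrable_finset_sum _ fun k _ => (hcWI k j).const_mul _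
    have hI3 : Integrable (fun ω => ∑ l, X j l * (c m l ω * W m ω i)) P :=
      integrable_finset_sum _ fun l _ => (hcWI l i).const_mul _
    have hI4 : Integrable (fun ω => W m ω i * W m ω j) P :=
      aux_integrable_mul (hWc m i) (hWc m j)
    show (∫ ω, (θ (m + 1) ω i - meanVec P (θ (m + 1)) i)
        * (θ (m + 1) ω j - meanVec P (θ (m + 1)) j) ∂P) = _
    rw [integral_congr_ae (Filter.Eventually.of_forall hpt)]
    have hI34 : Integrable (fun ω => ∑ l, X j l * (c m l ω * W m ω i)
        + W m ω i * W m ω j) P := hI3.add hI4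
    have hI234 : Integrable (fun ω => ∑ k, X i k * (c m k ω * W m ω j)
        + (∑ l, X j l * (c m l ω * W m ω i) + W m ω i * W m ω j)) P := hI2.add hI34
    rw [integral_add hI1 hI234, integral_add hI2 hI34, integral_add hI3 hI4]
    have hv1 : ∫ ω, ∑ k, ∑ l, (X i k * X j l) * (c m k ω * c m l ω) ∂P
        = ∑ k, ∑ l, (X i k * X j l) * covMat P (θ m) (θ m) k l := by
      rw [integral_finset_sum _ fun k _ => integrable_finset_sum _ fun l _ =>
        (hccI k l).const_mul _]
      refine Finset.sum_congr rfl fun k _ => ?_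
      rw [integral_finset_sum _ fun l _ => (hccI k l).const_mul _]
      refine Finset.sum_congr rfl fun l _ => ?_
      rw [integral_const_mul]
      rfl
    have hv2 : ∫ ω, ∑ k, X i k * (c m k ω * W m ω j) ∂P = 0 := by
      rw [integral_finset_sum _ fun k _ => (hcWI k j).const_mul _]
      refine Finset.sum_eq_zero fun k _ => ?_
      rw [integral_const_mul, hEcW m k j]
      ring
    have hv3 : ∫ ω, ∑ l, X j l * (c m l ω * W m ω i) ∂P = 0 := by
      rw [integral_finset_sum _ fun l _ => (hcWI l i).const_mul _]
      refine Finset.sum_eq_zero fun l _ => ?_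
      rw [integral_const_mul, hEcW m l i]
      ring
    rw [hv1, hv2, hv3, hWWint m i j]
    have hrhs : (X * covMat P (θ m) (θ m) * Xᵀ) i j
        = ∑ k, ∑ l, (X i k * X j l) * covMat P (θ m) (θ m) k l := by
      calc (X * covMat P (θ m) (θ m) * Xᵀ) i j
          = ∑ l, (∑ k, X i k * covMat P (θ m) (θ m) k l) * X j l := by
            simp [Matrix.mul_apply, Matrix.transpose_apply]
        _ = ∑ l, ∑ k, (X i k * X j l) * covMat P (θ m) (θ m) k l := by
            refine Finset.sum_congr rfl fun l _ => ?_
            rw [Finset.sum_mul]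
            exact Finset.sum_congr rfl fun k _ => by ring
        _ = _ := Finset.sum_comm
    simp only [Matrix.add_apply, hrhs]
    ring
  -- closed form for the covariance error
  have hD : ∀ m, covMat P (θ m) (θ m) - A⁻¹
      = X ^ m * (covMat P (θ 0) (θ 0) - A⁻¹) * (X ^ m)ᵀ := by
    intro m
    induction m with
    | zero => simp
    | succ m ih =>
      calc covMat P (θ (m + 1)) (θ (m + 1)) - A⁻¹
          = X * (covMat P (θ m) (θ m) - A⁻¹) * Xᵀ := by rw [hkey m]; noncomm_ring
        _ = X * (X ^ m * (covMat P (θ 0) (θ 0) - A⁻¹) * (X ^ m)ᵀ) * Xᵀ := by rw [ih]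
        _ = X ^ (m + 1) * (covMat P (θ 0) (θ 0) - A⁻¹) * (X ^ (m + 1))ᵀ := by
            rw [pow_succ', Matrix.transpose_mul]
            noncomm_ring
  have hcov_tendsto : Tendsto (fun m => covMat P (θ m) (θ m)) atTop (nhds A⁻¹) := by
    refine tendsto_pi_nhds.mpr fun i => tendsto_pi_nhds.mpr fun j => ?_
    have hrepr : ∀ m, covMat P (θ m) (θ m) i j
        = A⁻¹ i j + ∑ l, (∑ k, (X ^ m) i k * (covMat P (θ 0) (θ 0) - A⁻¹) k l)
          * (X ^ m) j l := by
      intro m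
      have h1 := congrFun (congrFun (hD m) i) j
      simp only [Matrix.sub_apply] at h1
      have h2 : (X ^ m * (covMat P (θ 0) (θ 0) - A⁻¹) * (X ^ m)ᵀ) i j
          = ∑ l, (∑ k, (X ^ m) i k * (covMat P (θ 0) (θ 0) - A⁻¹) k l)
            * (X ^ m) j l := by
        simp only [Matrix.mul_apply, Matrix.sub_apply, Matrix.transpose_apply]
      rw [← h2]
      linarith [h1]
    simp only [hrepr]
    have hzero : Tendsto (fun m => ∑ l, (∑ k, (X ^ m) i k
        * (covMat P (θ 0) (θ 0) - A⁻¹) k l) * (X ^ m) j l) atTop (nhds 0) := by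
      have : Tendsto (fun m => ∑ l, (∑ k, (X ^ m) i k
          * (covMat P (θ 0) (θ 0) - A⁻¹) k l) * (X ^ m) j l) atTop
          (nhds (∑ l : Fin n, 0)) := by
        refine tendsto_finset_sum _ fun l _ => ?_
        have hin : Tendsto (fun m => ∑ k, (X ^ m) i k
            * (covMat P (θ 0) (θ 0) - A⁻¹) k l) atTop (nhds 0) := by
          have : Tendsto (fun m => ∑ k, (X ^ m) i k
              * (covMat P (θ 0) (θ 0) - A⁻¹) k l) atTop (nhds (∑ k : Fin n, 0)) :=
            tendsto_finset_sum _ fun k _ => by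
              simpa using (hXpow i k).mul_const ((covMat P (θ 0) (θ 0) - A⁻¹) k l)
          simpa using this
        simpa using hin.mul (hXpow j l)
      simpa using this
    simpa using (tendsto_const_nhds (x := A⁻¹ i j)).add hzero
  exact ⟨hmean_tendsto, hcov_tendsto⟩
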